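/- For u4 < u3 < u2 < u1, the function I(u1,u2,u3,u4) = ∫_{u2}^{u1} dη/√((u1-η)(η-u2)(η-u3)(η-u4)) satisfies the Euler–Poisson–Darboux equations 2(u_i - u_j) ∂²I/∂u_i∂u_j = ∂I/∂u_i - ∂I/∂u_j for i,j ∈ {3,4} (i.e., for the variables in which the integrand is smooth on the integration interval). -/

import Mathlib

open Real MeasureTheory Set intervalIntegral Metric

/-- The complete hyperelliptic integral I(u1,u2,u3,u4). -/
noncomputable def Ifun (u1 u2 u3 u4 : ℝ) : ℝ :=
  ∫ η in u2..u1, 1 / Real.sqrt ((u1 - η) * (η - u2) * (η - u3) * (η - u4))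


lemma base_integrable {a b : ℝ} (hab : a < b) :
    IntervalIntegrable (fun η => 1 / (Real.sqrt (b - η) * Real.sqrt (η - a))) volume a b := by
  have hmeas : ∀ c d : ℝ, AEStronglyMeasurable (fun η => 1 / (Real.sqrt (b - η) * Real.sqrt (η - a)))
      ((volume : Measure ℝ).restrict (Set.uIoc c d)) := by
    intro c d
    exact ((measurable_const.sub measurable_id).sqrt.mul
      (measurable_id.sub measurable_const).sqrt).const_div 1 |>.aestronglyMeasurable
  set m := (a + b) / 2 with hm
  have ham : a < m := by simp only [hm]; linarith
  have hmb : m < b := by simp only [hm]; linarith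
  have part1 : IntervalIntegrable (fun η => 1 / (Real.sqrt (b - η) * Real.sqrt (η - a))) volume a m := by
    have hg : IntervalIntegrable (fun η => (1 / Real.sqrt (b - m)) * (η - a) ^ (-(1/2) : ℝ)) volume a m := by
      have h0 : IntervalIntegrable (fun x : ℝ => x ^ (-(1/2) : ℝ)) volume 0 (m - a) :=
        intervalIntegrable_rpow' (by norm_num)
      have := (h0.comp_sub_right a).const_mul (1 / Real.sqrt (b - m))
      simpa using this
    refine hg.mono_fun' (hmeas a m) ?_
    rw [Filter.EventuallyLE, ae_restrict_iff' measurableSet_uIoc]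
    refine Filter.Eventually.of_forall fun η hη => ?_
    rw [uIoc_of_le ham.le] at hη
    have h1 : 0 < η - a := by linarith [hη.1]
    have h2 : 0 < b - η := by linarith [hη.2]
    have h3 : 0 < b - m := by linarith
    have hr : (η - a) ^ (-(1/2) : ℝ) = 1 / Real.sqrt (η - a) := by
      rw [Real.rpow_neg h1.le, Real.sqrt_eq_rpow]; norm_num
    simp only [Real.norm_eq_abs, hr]
    rw [abs_of_nonneg (by positivity)]
    rw [div_mul_div_comm, one_mul]
    have hle : Real.sqrt (b - m) * Real.sqrt (η - a) ≤ Real.sqrt (b - η) * Real.sqrt (η - a) :=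
      mul_le_mul_of_nonneg_right (Real.sqrt_le_sqrt (by linarith [hη.2])) (Real.sqrt_nonneg _)
    exact one_div_le_one_div_of_le (by positivity) hle
  have part2 : IntervalIntegrable (fun η => 1 / (Real.sqrt (b - η) * Real.sqrt (η - a))) volume m b := by
    have hg : IntervalIntegrable (fun η => (1 / Real.sqrt (m - a)) * (b - η) ^ (-(1/2) : ℝ)) volume m b := by
      have h0 : IntervalIntegrable (fun x : ℝ => x ^ (-(1/2) : ℝ)) volume 0 (b - m) :=
        intervalIntegrable_rpow' (by norm_num)
      have := ((h0.comp_sub_left b).const_mul (1 / Real.sqrt (m - a))).symm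
      simpa using this
    refine hg.mono_fun' (hmeas m b) ?_
    rw [Filter.EventuallyLE, ae_restrict_iff' measurableSet_uIoc]
    refine Filter.Eventually.of_forall fun η hη => ?_
    rw [uIoc_of_le hmb.le] at hη
    have h1 : 0 < η - a := by linarith [hη.1]
    have h2 : 0 ≤ b - η := by linarith [hη.2]
    have h3 : 0 < m - a := by linarith
    have hr : (b - η) ^ (-(1/2) : ℝ) = 1 / Real.sqrt (b - η) := by
      rw [Real.rpow_neg h2, Real.sqrt_eq_rpow]; norm_num
    simp only [Real.norm_eq_abs, hr]
    rw [abs_of_nonneg (by positivity)]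
    rw [div_mul_div_comm, one_mul]
    rcases eq_or_lt_of_le h2 with h2e | h2l
    · rw [← h2e]; simp
    · have hle : Real.sqrt (m - a) * Real.sqrt (b - η) ≤ Real.sqrt (b - η) * Real.sqrt (η - a) := by
        rw [mul_comm]
        exact mul_le_mul_of_nonneg_left (Real.sqrt_le_sqrt (by linarith [hη.1])) (Real.sqrt_nonneg _)
      exact one_div_le_one_div_of_le (by positivity) hle
  exact part1.trans part2


/-- split integrand -/
noncomputable def G (u1 u2 : ℝ) (n m : ℕ) (x y η : ℝ) : ℝ :=
  1 / (Real.sqrt (u1 - η) * Real.sqrt (η - u2) * Real.sqrt (η - x) ^ n * Real.sqrt (η - y) ^ m)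

lemma G_meas (u1 u2 : ℝ) (n m : ℕ) (x y : ℝ) : Measurable (G u1 u2 n m x y) := by
  unfold G
  exact ((((measurable_const.sub measurable_id).sqrt.mul
    (measurable_id.sub measurable_const).sqrt).mul
    ((measurable_id.sub measurable_const).sqrt.pow_const n)).mul
    ((measurable_id.sub measurable_const).sqrt.pow_const m)).const_div 1

lemma G_nonneg (u1 u2 : ℝ) (n m : ℕ) (x y η : ℝ) : 0 ≤ G u1 u2 n m x y η := by
  unfold G; positivity

lemma G_symm (u1 u2 : ℝ) (n m : ℕ) (x y η : ℝ) :
    G u1 u2 n m x y η = G u1 u2 m n y x η := by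
  unfold G; ring_nf

lemma G_le {u1 u2 : ℝ} (h21 : u2 < u1) {n m : ℕ} {x y η : ℝ}
    (hx : x < u2) (hy : y < u2) (hη : η ∈ Set.Ioc u2 u1) :
    |G u1 u2 n m x y η| ≤ (1 / (Real.sqrt (u2 - x) ^ n * Real.sqrt (u2 - y) ^ m)) *
      (1 / (Real.sqrt (u1 - η) * Real.sqrt (η - u2))) := by
  rw [abs_of_nonneg (G_nonneg _ _ _ _ _ _ _)]
  rcases hη.2.eq_or_lt with rfl | hlt
  · simp [G]
  · have h1 : 0 < u1 - η := by linarith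
    have h2 : 0 < η - u2 := hη.1 |> sub_pos.mpr
    have h3 : 0 < u2 - x := sub_pos.mpr hx
    have h4 : 0 < u2 - y := sub_pos.mpr hy
    have h5 : 0 < η - x := by linarith [hη.1]
    have h6 : 0 < η - y := by linarith [hη.1]
    rw [div_mul_div_comm, one_mul]
    unfold G
    apply one_div_le_one_div_of_le (by positivity)
    calc Real.sqrt (u2 - x) ^ n * Real.sqrt (u2 - y) ^ m * (Real.sqrt (u1 - η) * Real.sqrt (η - u2))
        = Real.sqrt (u1 - η) * Real.sqrt (η - u2) * Real.sqrt (u2 - x) ^ n * Real.sqrt (u2 - y) ^ m := by ring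
      _ ≤ Real.sqrt (u1 - η) * Real.sqrt (η - u2) * Real.sqrt (η - x) ^ n * Real.sqrt (η - y) ^ m := by
          gcongr <;> first | positivity | linarith [hη.1]

/-- pointwise derivative in the x slot -/
lemma G_hasDerivAt {u1 u2 : ℝ} (n m : ℕ) {x y η : ℝ} (hx : x < η) :
    HasDerivAt (fun x => G u1 u2 n m x y η)
      ((n / 2 : ℝ) * G u1 u2 (n + 2) m x y η) x := by
  have hv : (0:ℝ) < η - x := sub_pos.mpr hx
  have hs : Real.sqrt (η - x) ≠ 0 := (Real.sqrt_pos.mpr hv).ne'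
  have h1 : HasDerivAt (fun x : ℝ => η - x) (-1) x := by
    simpa using (hasDerivAt_id x).const_sub η
  have h2 : HasDerivAt (fun x : ℝ => Real.sqrt (η - x)) (-(1 / (2 * Real.sqrt (η - x)))) x := by
    convert h1.sqrt hv.ne' using 1; ring
  have h3 : HasDerivAt (fun x : ℝ => Real.sqrt (η - x) ^ n)
      ((n : ℝ) * Real.sqrt (η - x) ^ (n - 1) * (-(1 / (2 * Real.sqrt (η - x))))) x := h2.pow n
  have h4 : HasDerivAt (fun x : ℝ => (Real.sqrt (η - x) ^ n)⁻¹)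
      (-((n : ℝ) * Real.sqrt (η - x) ^ (n - 1) * (-(1 / (2 * Real.sqrt (η - x))))) /
        (Real.sqrt (η - x) ^ n) ^ 2) x := h3.inv (pow_ne_zero _ hs)
  have key := h4.const_mul (1 / (Real.sqrt (u1 - η) * Real.sqrt (η - u2) * Real.sqrt (η - y) ^ m))
  have heq : (fun x => G u1 u2 n m x y η) =
      fun x => (1 / (Real.sqrt (u1 - η) * Real.sqrt (η - u2) * Real.sqrt (η - y) ^ m)) *
        (Real.sqrt (η - x) ^ n)⁻¹ := by
    funext t; unfold G; rw [one_div, one_div, mul_inv, mul_inv, mul_inv]; ring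
  rw [heq]
  refine key.congr_deriv (Eq.symm ?_)
  rcases n with _ | k
  · simp
  · simp only [Nat.add_sub_cancel]
    have hG : G u1 u2 (k + 1 + 2) m x y η =
        (1 / (Real.sqrt (u1 - η) * Real.sqrt (η - u2) * Real.sqrt (η - y) ^ m)) *
          (Real.sqrt (η - x) ^ (k + 1 + 2))⁻¹ := by
      unfold G; rw [one_div, one_div, mul_inv, mul_inv, mul_inv]; ring
    have inner : (((k+1:ℕ):ℝ) / 2) * (Real.sqrt (η - x) ^ (k + 1 + 2))⁻¹
        = -(((k+1:ℕ):ℝ) * Real.sqrt (η - x) ^ k * -(1 / (2 * Real.sqrt (η - x)))) /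
            (Real.sqrt (η - x) ^ (k + 1)) ^ 2 := by
      field_simp
      ring
    rw [hG, ← inner]
    push_cast
    ring

lemma G_intervalIntegrable (h21 : u2 < u1) (n m : ℕ) {x y : ℝ} (hx : x < u2) (hy : y < u2) :
    IntervalIntegrable (G u1 u2 n m x y) volume u2 u1 := by
  refine ((base_integrable h21).const_mul
      (1 / (Real.sqrt (u2 - x) ^ n * Real.sqrt (u2 - y) ^ m))).mono_fun'
    (G_meas u1 u2 n m x y).aestronglyMeasurable ?_
  rw [Filter.EventuallyLE, ae_restrict_iff' measurableSet_uIoc]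
  refine Filter.Eventually.of_forall fun η hη => ?_
  rw [uIoc_of_le h21.le] at hη
  simpa [Real.norm_eq_abs] using G_le h21 hx hy hη

lemma hasDerivAt_Gint (h21 : u2 < u1) (n m : ℕ) {x₀ y : ℝ}
    (hx₀ : x₀ < u2) (hy : y < u2) :
    IntervalIntegrable (fun η => ((n : ℝ) / 2) * G u1 u2 (n + 2) m x₀ y η) volume u2 u1 ∧
    HasDerivAt (fun x => ∫ η in u2..u1, G u1 u2 n m x y η)
      (∫ η in u2..u1, ((n : ℝ) / 2) * G u1 u2 (n + 2) m x₀ y η) x₀ := by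
  have hε : (0:ℝ) < (u2 - x₀) / 2 := by linarith
  set ε := (u2 - x₀) / 2 with hεdef
  have hball : ∀ x ∈ Metric.ball x₀ ε, x < u2 ∧ ε ≤ u2 - x := by
    intro x hx
    rw [Metric.mem_ball, Real.dist_eq, abs_lt] at hx
    constructor
    · simp only [hεdef] at hx ⊢; linarith [hx.2]
    · simp only [hεdef] at hx ⊢; linarith [hx.2]
  have hsε : 0 < Real.sqrt ε := Real.sqrt_pos.mpr hε
  have hsy : 0 < Real.sqrt (u2 - y) := Real.sqrt_pos.mpr (by linarith)
  refine intervalIntegral.hasDerivAt_integral_of_dominated_loc_of_deriv_le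
    (F := fun x η => G u1 u2 n m x y η)
    (F' := fun x η => ((n : ℝ) / 2) * G u1 u2 (n + 2) m x y η)
    (bound := fun η => ((n : ℝ) / 2) * ((1 / (Real.sqrt ε ^ (n + 2) * Real.sqrt (u2 - y) ^ m)) *
      (1 / (Real.sqrt (u1 - η) * Real.sqrt (η - u2))))) (Metric.ball_mem_nhds x₀ hε)
    (Filter.Eventually.of_forall fun x => (G_meas u1 u2 n m x y).aestronglyMeasurable)
    (G_intervalIntegrable h21 n m hx₀ hy)
    (((G_meas u1 u2 (n+2) m x₀ y).const_mul _).aestronglyMeasurable)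
    (Filter.Eventually.of_forall fun t ht x hx => ?_)
    (((base_integrable h21).const_mul _).const_mul _)
    (Filter.Eventually.of_forall fun t ht x hx =>
      G_hasDerivAt n m (lt_trans (hball x hx).1 (by rw [uIoc_of_le h21.le] at ht; exact ht.1)))
  rw [uIoc_of_le h21.le] at ht
  obtain ⟨hxu2, hεle⟩ := hball x hx
  rw [Real.norm_eq_abs, abs_mul, abs_of_nonneg (by positivity : (0:ℝ) ≤ (n:ℝ)/2)]
  refine mul_le_mul_of_nonneg_left ?_ (by positivity)
  calc |G u1 u2 (n + 2) m x y t|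
      ≤ (1 / (Real.sqrt (u2 - x) ^ (n + 2) * Real.sqrt (u2 - y) ^ m)) *
        (1 / (Real.sqrt (u1 - t) * Real.sqrt (t - u2))) := G_le h21 hxu2 hy ht
    _ ≤ (1 / (Real.sqrt ε ^ (n + 2) * Real.sqrt (u2 - y) ^ m)) *
        (1 / (Real.sqrt (u1 - t) * Real.sqrt (t - u2))) := by
        refine mul_le_mul_of_nonneg_right ?_ (by positivity)
        refine one_div_le_one_div_of_le (by positivity) ?_
        exact mul_le_mul_of_nonneg_right
          (pow_le_pow_left₀ hsε.le (Real.sqrt_le_sqrt hεle) _) (by positivity)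

lemma Ifun_eq {u1 u2 : ℝ} (h21 : u2 < u1) {x y : ℝ} (hx : x ≤ u2) (hy : y ≤ u2) :
    Ifun u1 u2 x y = ∫ η in u2..u1, G u1 u2 1 1 x y η := by
  unfold Ifun
  refine intervalIntegral.integral_congr fun η hη => ?_
  rw [uIcc_of_le h21.le] at hη
  have h1 : (0:ℝ) ≤ u1 - η := by linarith [hη.2]
  have h2 : (0:ℝ) ≤ η - u2 := by linarith [hη.1]
  have h3 : (0:ℝ) ≤ η - x := by linarith [hη.1]
  have h4 : (0:ℝ) ≤ η - y := by linarith [hη.1]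
  rw [Real.sqrt_mul (by positivity), Real.sqrt_mul (by positivity), Real.sqrt_mul h1]
  simp [G]

lemma key1 {u1 u2 : ℝ} (h21 : u2 < u1) {x y : ℝ} (hx : x < u2) (hy : y < u2) :
    IntervalIntegrable (fun η => (1/2 : ℝ) * G u1 u2 3 1 x y η) volume u2 u1 ∧
    HasDerivAt (fun t => ∫ η in u2..u1, G u1 u2 1 1 t y η)
      (∫ η in u2..u1, (1/2 : ℝ) * G u1 u2 3 1 x y η) x := by
  have h := hasDerivAt_Gint h21 1 1 hx hy
  simpa using h

lemma key2 {u1 u2 : ℝ} (h21 : u2 < u1) {x y : ℝ} (hx : x < u2) (hy : y < u2) :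
    IntervalIntegrable (fun η => (1/2 : ℝ) * G u1 u2 3 3 x y η) volume u2 u1 ∧
    HasDerivAt (fun t => ∫ η in u2..u1, G u1 u2 1 3 t y η)
      (∫ η in u2..u1, (1/2 : ℝ) * G u1 u2 3 3 x y η) x := by
  have h := hasDerivAt_Gint h21 1 3 hx hy
  simpa using h

/-- I satisfies the Euler–Poisson–Darboux equations in the variables u3, u4. -/
theorem I_EPD (u1 u2 u3 u4 : ℝ) (h43 : u4 < u3) (h32 : u3 < u2) (h21 : u2 < u1) :
    2 * (u3 - u4) * deriv (fun x => deriv (fun y => Ifun u1 u2 x y) u4) u3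
        = deriv (fun x => Ifun u1 u2 x u4) u3 - deriv (fun y => Ifun u1 u2 u3 y) u4 ∧
    2 * (u4 - u3) * deriv (fun y => deriv (fun x => Ifun u1 u2 x y) u3) u4
        = deriv (fun y => Ifun u1 u2 u3 y) u4 - deriv (fun x => Ifun u1 u2 x u4) u3 := by
  have h42 : u4 < u2 := by linarith
  -- notation
  set A := ∫ η in u2..u1, (1/2 : ℝ) * G u1 u2 3 1 u3 u4 η with hA
  set B := ∫ η in u2..u1, (1/2 : ℝ) * G u1 u2 3 1 u4 u3 η with hB
  set M := ∫ η in u2..u1, (1/2 : ℝ) * G u1 u2 3 3 u3 u4 η with hM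
  -- first partial in x at u3 (for general y < u2)
  have derivX : ∀ y : ℝ, y < u2 → deriv (fun x => Ifun u1 u2 x y) u3
      = ∫ η in u2..u1, (1/2 : ℝ) * G u1 u2 3 1 u3 y η := by
    intro y hy
    refine HasDerivAt.deriv ?_
    refine ((key1 h21 h32 hy).2).congr_of_eventuallyEq ?_
    filter_upwards [Iio_mem_nhds h32] with t ht
    exact Ifun_eq h21 (le_of_lt ht) hy.le
  -- first partial in y at u4 (for general x < u2)
  have derivY : ∀ x : ℝ, x < u2 → deriv (fun y => Ifun u1 u2 x y) u4
      = ∫ η in u2..u1, (1/2 : ℝ) * G u1 u2 3 1 u4 x η := by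
    intro x hx
    refine HasDerivAt.deriv ?_
    refine ((key1 h21 h42 hx).2).congr_of_eventuallyEq ?_
    filter_upwards [Iio_mem_nhds h42] with t ht
    rw [Ifun_eq h21 hx.le (le_of_lt ht)]
    exact intervalIntegral.integral_congr fun η _ => G_symm u1 u2 1 1 x t η
  -- similarly, partial in x at u3 as a function of y... (already derivX)
  have hAint : IntervalIntegrable (fun η => (1/2 : ℝ) * G u1 u2 3 1 u3 u4 η) volume u2 u1 :=
    (key1 h21 h32 h42).1
  have hBint : IntervalIntegrable (fun η => (1/2 : ℝ) * G u1 u2 3 1 u4 u3 η) volume u2 u1 :=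
    (key1 h21 h42 h32).1
  -- pointwise EPD identity for the integrands
  have hident : ∀ η ∈ Set.uIcc u2 u1,
      (u3 - u4) * ((1/2 : ℝ) * G u1 u2 3 3 u3 u4 η)
        = (1/2 : ℝ) * G u1 u2 3 1 u3 u4 η - (1/2 : ℝ) * G u1 u2 3 1 u4 u3 η := by
    intro η hη
    rw [uIcc_of_le h21.le] at hη
    have hc2 : Real.sqrt (η - u3) ^ 2 = η - u3 := Real.sq_sqrt (by linarith [hη.1])
    have hd2 : Real.sqrt (η - u4) ^ 2 = η - u4 := Real.sq_sqrt (by linarith [hη.1])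
    have hc : Real.sqrt (η - u3) ≠ 0 := by
      refine (Real.sqrt_pos.mpr (by linarith [hη.1])).ne'
    have hd : Real.sqrt (η - u4) ≠ 0 := by
      refine (Real.sqrt_pos.mpr (by linarith [hη.1])).ne'
    unfold G
    set a := Real.sqrt (u1 - η) with ha
    set b := Real.sqrt (η - u2) with hb
    set c := Real.sqrt (η - u3) with hcdef
    set d := Real.sqrt (η - u4) with hddef
    have hu3 : u3 = η - c ^ 2 := by rw [hc2]; ring
    have hu4 : u4 = η - d ^ 2 := by rw [hd2]; ring
    rcases eq_or_ne a 0 with ha0 | ha0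
    · simp [ha0]
    rcases eq_or_ne b 0 with hb0 | hb0
    · simp [hb0]
    rw [hu3, hu4]
    field_simp
    ring
  -- value of the mixed derivative (x then y order and y then x order)
  have mixed1 : deriv (fun x => deriv (fun y => Ifun u1 u2 x y) u4) u3 = (1/2 : ℝ) * M := by
    refine HasDerivAt.deriv ?_
    have hkey := ((key2 h21 h32 h42).2).const_mul (1/2 : ℝ)
    rw [hM]
    refine hkey.congr_of_eventuallyEq ?_
    filter_upwards [Iio_mem_nhds h32] with t ht
    rw [derivY t ht]
    rw [show (∫ η in u2..u1, (1/2 : ℝ) * G u1 u2 3 1 u4 t η)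
        = ∫ η in u2..u1, (1/2 : ℝ) * G u1 u2 1 3 t u4 η from
      intervalIntegral.integral_congr fun η _ => by rw [G_symm u1 u2 3 1 u4 t η]]
    rw [intervalIntegral.integral_const_mul]
  have mixed2 : deriv (fun y => deriv (fun x => Ifun u1 u2 x y) u3) u4 = (1/2 : ℝ) * M := by
    refine HasDerivAt.deriv ?_
    have hkey := ((key2 h21 h42 h32).2).const_mul (1/2 : ℝ)
    have hMsym : (1/2 : ℝ) * M
        = (1/2 : ℝ) * ∫ η in u2..u1, (1/2 : ℝ) * G u1 u2 3 3 u4 u3 η := by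
      rw [hM]
      congr 1
      exact intervalIntegral.integral_congr fun η _ => by rw [G_symm u1 u2 3 3 u3 u4 η]
    rw [hMsym]
    refine hkey.congr_of_eventuallyEq ?_
    filter_upwards [Iio_mem_nhds h42] with t ht
    rw [derivX t ht]
    rw [show (∫ η in u2..u1, (1/2 : ℝ) * G u1 u2 3 1 u3 t η)
        = ∫ η in u2..u1, (1/2 : ℝ) * G u1 u2 1 3 t u3 η from
      intervalIntegral.integral_congr fun η _ => by rw [G_symm u1 u2 3 1 u3 t η]]
    rw [intervalIntegral.integral_const_mul]
  have hAval : deriv (fun x => Ifun u1 u2 x u4) u3 = A := derivX u4 h42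
  have hBval : deriv (fun y => Ifun u1 u2 u3 y) u4 = B := derivY u3 h32
  have hsub : A - B = (u3 - u4) * M := by
    rw [hA, hB, ← intervalIntegral.integral_sub hAint hBint]
    rw [hM, ← intervalIntegral.integral_const_mul]
    exact intervalIntegral.integral_congr fun η hη => (hident η hη).symm
  constructor
  · rw [mixed1, hAval, hBval]; linarith [hsub]
  · rw [mixed2, hAval, hBval]; linarith [hsub]
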